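/- Every Φ2-feasible tuple (q, n, p, (P_k)_{k∈𝒦}) is Φ1-feasible. -/

import Mathlib

noncomputable def alphaC : ℝ := -3 - 9 * Real.log (2 / 3)

noncomputable def Delta1 (d : ℕ) (δ q : ℝ) : ℝ :=
  Real.sqrt d * (q - 1) + Real.sqrt (2 * Real.sqrt d * (q - 1) * Real.log (2 / δ)) +
    (4 / 3) * Real.log (2 / δ)

noncomputable def Delta2 (d : ℕ) (δ q : ℝ) : ℝ :=
  (q - 1) + Real.sqrt (Delta1 d δ q + Real.sqrt (2 * Real.sqrt d * (q - 1) * Real.log (2 / δ)))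

def DeltaInf (q : ℝ) : ℝ := q + 1

noncomputable def S1 (n p : ℝ) : ℝ :=
  ((3 * p ^ 2 - 3 * p + 1) / (n * (n + 1) * (n + 2) * p ^ 2 * (1 - p) ^ 2)) *
    (3 * n + 2 + 2 / (p * (1 - p)))

noncomputable def S2 (d : ℕ) (δ n p : ℝ) : ℝ :=
  (Real.sqrt (2 * n * p * (1 - p) * Real.log (20 * d / δ)) + 1 +
    (2 / 3) * max p (1 - p) * Real.log (20 * d / δ)) ^ 2

/-- The privacy budget estimate ε(q, n, p). -/
noncomputable def eps (d : ℕ) (δ q n p : ℝ) : ℝ :=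
  Delta2 d δ q * Real.sqrt (2 * Real.log (1.25 / δ)) / Real.sqrt (n * p * (1 - p)) +
  alphaC * Delta1 d δ q * (n * p * (1 - p) + 1) * (p ^ 2 + (1 - p) ^ 2) /
    (n ^ 2 * p ^ 2 * (1 - p) ^ 2 * (1 - δ / 10)) +
  (Delta2 d δ q / Real.sqrt (1 - δ / 10)) * Real.sqrt (2 * S1 n p * Real.log (10 / δ)) +
  (2 / 3) * alphaC * S2 d δ n p * (p ^ 2 + (1 - p) ^ 2) * Real.log (10 / δ) * DeltaInf q /
    (n ^ 2 * p ^ 2 * (1 - p) ^ 2) +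
  2 * Real.log (1.25 / δ) * DeltaInf q / (n * p * (1 - p))

/-- The channel-capacity constant C = (1 + min_k P^max_k h_k / ω₀)^{TW/d}. -/
noncomputable def Cval {ι : Type*} [Fintype ι] [Nonempty ι] (d : ℕ) (T W ω₀ : ℝ)
    (h Pmax : ι → ℝ) : ℝ :=
  (1 + Finset.univ.inf' Finset.univ_nonempty (fun k => Pmax k * h k / ω₀)) ^ (T * W / (d : ℝ))

/-- The objective φ(q, n, p) = (1 + n p (1-p)) / (q-1)². -/
noncomputable def phi (q n : ℤ) (p : ℝ) : ℝ :=
  (1 + (n : ℝ) * p * (1 - p)) / ((q : ℝ) - 1) ^ 2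

/-- Feasibility for problem (Φ1). -/
def Phi1Feasible {ι : Type*} [Fintype ι] [Nonempty ι] (d : ℕ) (δ : ℝ) (K : ℕ)
    (eb T W ω₀ : ℝ) (h Pmin Pmax : ι → ℝ) (q n : ℤ) (p : ℝ) (P : ι → ℝ) : Prop :=
  (2 ≤ q ∧ q ≤ ⌊Cval d T W ω₀ h Pmax⌋ - 2) ∧
  (2 ≤ n ∧ n ≤ ⌊Cval d T W ω₀ h Pmax⌋ - 2) ∧
  (0 < p ∧ p < 1) ∧
  max (23 * Real.log (10 * d / δ)) (2 * ((q : ℝ) + 1)) ≤ (K : ℝ) * (n : ℝ) * p * (1 - p) ∧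
  eps d δ (q : ℝ) (n : ℝ) p ≤ eb ∧
  (∀ k, (d : ℝ) * Real.logb 2 ((q : ℝ) + (n : ℝ)) ≤
    T * W * Real.logb 2 (1 + P k * h k / ω₀)) ∧
  (∀ k, Pmin k ≤ P k ∧ P k ≤ Pmax k)

/-- n₁(q, p): the least positive integer n' with ε(q, n', p) ≤ ε̄. -/
noncomputable def nOne (d : ℕ) (δ eb : ℝ) (q : ℤ) (p : ℝ) : ℕ :=
  sInf {n' : ℕ | 1 ≤ n' ∧ eps d δ (q : ℝ) (n' : ℝ) p ≤ eb}

/-- Feasibility for problem (Φ2). -/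
def Phi2Feasible {ι : Type*} [Fintype ι] [Nonempty ι] (d : ℕ) (δ : ℝ) (K : ℕ)
    (eb T W ω₀ : ℝ) (h Pmin Pmax : ι → ℝ) (q n : ℤ) (p : ℝ) (P : ι → ℝ) : Prop :=
  (2 ≤ q ∧ q ≤ ⌊Cval d T W ω₀ h Pmax⌋ - 2) ∧
  (2 ≤ n ∧ n ≤ ⌊Cval d T W ω₀ h Pmax⌋ - 2) ∧
  (0 < p ∧ p < 1) ∧
  ((q : ℝ) + (n : ℝ) ≤ Cval d T W ω₀ h Pmax) ∧
  n = max ⌈max (23 * Real.log (10 * d / δ)) (2 * ((q : ℝ) + 1)) / ((K : ℝ) * p * (1 - p))⌉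
        ((nOne d δ eb q p : ℤ)) ∧
  (∀ k, P k = min (Pmax k)
    (max (Pmin k) (ω₀ * (((q : ℝ) + (n : ℝ)) ^ ((d : ℝ) / (T * W)) - 1) / h k)))

lemma alpha_pos : 0 < alphaC := by
  have h1 : Real.exp (1/3) < 3/2 := by
    have h3 : Real.exp 1 = Real.exp (1/3) ^ 3 := by
      rw [← Real.exp_nat_mul]; norm_num
    have := Real.exp_one_lt_d9
    nlinarith [Real.exp_pos (1/3), sq_nonneg (Real.exp (1/3) - 3/2), sq_nonneg (Real.exp (1/3) + 3/2)]
  have h2 : Real.log (2/3) < -(1/3) := by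
    rw [Real.log_lt_iff_lt_exp (by norm_num), Real.exp_neg]
    have he := Real.exp_pos (1/3)
    rw [lt_inv_comm₀ (by norm_num) he]
    linarith
  unfold alphaC; linarith

lemma Delta1_nonneg (d : ℕ) {δ q : ℝ} (hδ0 : 0 < δ) (hδ1 : δ < 1) (hq : 2 ≤ q) :
    0 ≤ Delta1 d δ q := by
  have hl : 0 ≤ Real.log (2 / δ) := Real.log_nonneg (by rw [le_div_iff₀ hδ0]; linarith)
  unfold Delta1
  have h1 : 0 ≤ Real.sqrt d * (q - 1) := mul_nonneg (Real.sqrt_nonneg _) (by linarith)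
  have h2 := Real.sqrt_nonneg (2 * Real.sqrt d * (q - 1) * Real.log (2 / δ))
  linarith

lemma Delta2_nonneg (d : ℕ) {δ q : ℝ} (hq : 2 ≤ q) : 0 ≤ Delta2 d δ q := by
  unfold Delta2
  have := Real.sqrt_nonneg (Delta1 d δ q + Real.sqrt (2 * Real.sqrt d * (q - 1) * Real.log (2 / δ)))
  linarith

lemma div_anti {a b c : ℝ} (ha : 0 ≤ a) (hc : 0 < c) (h : c ≤ b) : a / b ≤ a / c :=
  div_le_div_of_nonneg_left ha hc h

set_option maxHeartbeats 1000000 in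
lemma eps_anti (d : ℕ) {δ q p : ℝ} (hδ0 : 0 < δ) (hδ1 : δ < 1) (hq : 2 ≤ q)
    (hp : 0 < p) (hp1 : p < 1) {m n : ℝ} (hm : 1 ≤ m) (hmn : m ≤ n) :
    eps d δ q n p ≤ eps d δ q m p := by
  have hm0 : 0 < m := by linarith
  have hn0 : 0 < n := by linarith
  have h1p : 0 < 1 - p := by linarith
  have hA : 0 < p * (1 - p) := mul_pos hp h1p
  have hD : 0 < 1 - δ / 10 := by linarith
  have hL2 : 0 < Real.log (1.25 / δ) := Real.log_pos (by rw [lt_div_iff₀ hδ0]; linarith)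
  have hL10 : 0 < Real.log (10 / δ) := Real.log_pos (by rw [lt_div_iff₀ hδ0]; linarith)
  have hD1 : 0 ≤ Delta1 d δ q := Delta1_nonneg d hδ0 hδ1 hq
  have hD2 : 0 ≤ Delta2 d δ q := Delta2_nonneg d hq
  have hDi : 0 ≤ DeltaInf q := by unfold DeltaInf; linarith
  have hα := alpha_pos
  -- term 1
  have h1 : Delta2 d δ q * Real.sqrt (2 * Real.log (1.25 / δ)) / Real.sqrt (n * p * (1 - p)) ≤
      Delta2 d δ q * Real.sqrt (2 * Real.log (1.25 / δ)) / Real.sqrt (m * p * (1 - p)) := by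
    refine div_anti (mul_nonneg hD2 (Real.sqrt_nonneg _)) (Real.sqrt_pos.2 (by positivity)) ?_
    apply Real.sqrt_le_sqrt; nlinarith
  -- term 2
  have h2 : alphaC * Delta1 d δ q * (n * p * (1 - p) + 1) * (p ^ 2 + (1 - p) ^ 2) /
      (n ^ 2 * p ^ 2 * (1 - p) ^ 2 * (1 - δ / 10)) ≤
      alphaC * Delta1 d δ q * (m * p * (1 - p) + 1) * (p ^ 2 + (1 - p) ^ 2) /
      (m ^ 2 * p ^ 2 * (1 - p) ^ 2 * (1 - δ / 10)) := by
    rw [div_le_div_iff₀ (by positivity) (by positivity)]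
    have key : (n * (p * (1 - p)) + 1) * m ^ 2 ≤ (m * (p * (1 - p)) + 1) * n ^ 2 := by
      nlinarith [mul_nonneg (mul_nonneg hA.le hm0.le) (mul_nonneg hn0.le (sub_nonneg.2 hmn))]
    have hc : 0 ≤ alphaC * Delta1 d δ q * (p ^ 2 + (1 - p) ^ 2) * (p ^ 2 * (1 - p) ^ 2 * (1 - δ / 10)) := by
      positivity
    linarith [mul_le_mul_of_nonneg_left key hc]
  -- term 3
  have hS1 : S1 n p ≤ S1 m p := by
    have hc : 0 < 2 / (p * (1 - p)) := by positivity
    have hB : (0:ℝ) < 3 * p ^ 2 - 3 * p + 1 := by nlinarith [sq_nonneg (2*p - 1)]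
    have e1 : ∀ x : ℝ, S1 x p =
        ((3 * p ^ 2 - 3 * p + 1) * (3 * x + 2 + 2 / (p * (1 - p)))) /
          (x * (x + 1) * (x + 2) * p ^ 2 * (1 - p) ^ 2) := by
      intro x; unfold S1; ring
    rw [e1 n, e1 m]
    rw [div_le_div_iff₀ (by positivity) (by positivity)]
    set c := 2 / (p * (1 - p)) with hcdef
    have hfac : 0 ≤ (n - m) * (c * (n^2 + n*m + m^2 + 3*n + 3*m + 2) +
        3*m*n*(n+m) + 9*m*n + 2*(n^2 + n*m + m^2) + 6*(n+m) + 4) := by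
      apply mul_nonneg (sub_nonneg.2 hmn)
      have l1 : 0 ≤ c * (n^2 + n*m + m^2 + 3*n + 3*m + 2) := by
        apply mul_nonneg hc.le; nlinarith [mul_nonneg hm0.le hn0.le]
      nlinarith [mul_nonneg (mul_nonneg hm0.le hn0.le) (add_nonneg hn0.le hm0.le),
        mul_nonneg hm0.le hn0.le]
    have key : (3 * n + 2 + c) * (m * (m + 1) * (m + 2)) ≤
        (3 * m + 2 + c) * (n * (n + 1) * (n + 2)) := by linarith [hfac]
    have hc2 : (0:ℝ) ≤ (3 * p ^ 2 - 3 * p + 1) * (p ^ 2 * (1 - p) ^ 2) := by positivity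
    linarith [mul_le_mul_of_nonneg_left key hc2]
  have h3 : (Delta2 d δ q / Real.sqrt (1 - δ / 10)) * Real.sqrt (2 * S1 n p * Real.log (10 / δ)) ≤
      (Delta2 d δ q / Real.sqrt (1 - δ / 10)) * Real.sqrt (2 * S1 m p * Real.log (10 / δ)) := by
    apply mul_le_mul_of_nonneg_left _ (by positivity)
    apply Real.sqrt_le_sqrt; nlinarith
  -- term 4
  have hL20 : 0 ≤ Real.log (20 * d / δ) := by
    rcases Nat.eq_zero_or_pos d with rfl | hd
    · simp
    · refine Real.log_nonneg ?_
      rw [le_div_iff₀ hδ0]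
      have : (1:ℝ) ≤ d := by exact_mod_cast hd
      nlinarith
  have hS2 : S2 d δ n p / n ^ 2 ≤ S2 d δ m p / m ^ 2 := by
    set L := Real.log (20 * ↑d / δ) with hL
    set s := Real.sqrt (2 * p * (1 - p) * L) with hs
    have hBpos : (0:ℝ) ≤ 1 + 2 / 3 * max p (1 - p) * L := by
      have h1 : 0 ≤ max p (1 - p) := le_trans hp.le (le_max_left _ _)
      have : 0 ≤ 2 / 3 * max p (1 - p) * L := by positivity
      linarith
    have e2 : ∀ x : ℝ, 0 < x →
        (Real.sqrt (2 * x * p * (1 - p) * L) + 1 + 2 / 3 * max p (1 - p) * L) / x =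
          s / Real.sqrt x + (1 + 2 / 3 * max p (1 - p) * L) / x := by
      intro x hx
      have hsx : 0 < Real.sqrt x := Real.sqrt_pos.2 hx
      have e0 : Real.sqrt (2 * x * p * (1 - p) * L) = Real.sqrt x * s := by
        rw [hs, ← Real.sqrt_mul hx.le]; ring_nf
      rw [e0]
      rw [div_add_div _ _ hsx.ne' hx.ne']
      rw [div_eq_div_iff (by positivity) (by positivity)]
      have hxx : Real.sqrt x * Real.sqrt x = x := Real.mul_self_sqrt hx.le
      linear_combination (s * x) * hxx
    have key : (Real.sqrt (2 * n * p * (1 - p) * L) + 1 + 2 / 3 * max p (1 - p) * L) / n ≤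
        (Real.sqrt (2 * m * p * (1 - p) * L) + 1 + 2 / 3 * max p (1 - p) * L) / m := by
      rw [e2 n hn0, e2 m hm0]
      have t1 : s / Real.sqrt n ≤ s / Real.sqrt m :=
        div_anti (Real.sqrt_nonneg _) (Real.sqrt_pos.2 hm0) (Real.sqrt_le_sqrt hmn)
      have t2 : (1 + 2 / 3 * max p (1 - p) * L) / n ≤ (1 + 2 / 3 * max p (1 - p) * L) / m :=
        div_anti hBpos hm0 hmn
      linarith
    have base_nonneg : 0 ≤ (Real.sqrt (2 * n * p * (1 - p) * L) + 1 + 2 / 3 * max p (1 - p) * L) / n := by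
      have := Real.sqrt_nonneg (2 * n * p * (1 - p) * L)
      apply div_nonneg _ hn0.le; linarith
    have k2 := pow_le_pow_left₀ base_nonneg key 2
    rw [div_pow, div_pow] at k2
    unfold S2
    exact k2
  have h4 : 2 / 3 * alphaC * S2 d δ n p * (p ^ 2 + (1 - p) ^ 2) * Real.log (10 / δ) * DeltaInf q /
      (n ^ 2 * p ^ 2 * (1 - p) ^ 2) ≤
      2 / 3 * alphaC * S2 d δ m p * (p ^ 2 + (1 - p) ^ 2) * Real.log (10 / δ) * DeltaInf q /
      (m ^ 2 * p ^ 2 * (1 - p) ^ 2) := by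
    have e3 : ∀ x : ℝ, x ≠ 0 →
        2 / 3 * alphaC * S2 d δ x p * (p ^ 2 + (1 - p) ^ 2) * Real.log (10 / δ) * DeltaInf q /
          (x ^ 2 * p ^ 2 * (1 - p) ^ 2) =
        (2 / 3 * alphaC * (p ^ 2 + (1 - p) ^ 2) * Real.log (10 / δ) * DeltaInf q /
          (p ^ 2 * (1 - p) ^ 2)) * (S2 d δ x p / x ^ 2) := by
      intro x hx; field_simp
    rw [e3 n hn0.ne', e3 m hm0.ne']
    apply mul_le_mul_of_nonneg_left hS2
    positivity
  -- term 5
  have h5 : 2 * Real.log (1.25 / δ) * DeltaInf q / (n * p * (1 - p)) ≤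
      2 * Real.log (1.25 / δ) * DeltaInf q / (m * p * (1 - p)) := by
    refine div_anti (by positivity) (by positivity) (by nlinarith)
  unfold eps
  exact add_le_add (add_le_add (add_le_add (add_le_add h1 h2) h3) h4) h5

set_option maxHeartbeats 1000000 in
lemma eps_bound (d : ℕ) {δ q p : ℝ} (hδ0 : 0 < δ) (hδ1 : δ < 1) (hq : 2 ≤ q)
    (hp : 0 < p) (hp1 : p < 1) :
    ∃ M : ℝ, ∀ n : ℝ, 1 ≤ n → eps d δ q n p ≤ M / Real.sqrt n := by
  have h1p : 0 < 1 - p := by linarith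
  have hA : 0 < p * (1 - p) := mul_pos hp h1p
  have hD : 0 < 1 - δ / 10 := by linarith
  have hL2 : 0 < Real.log (1.25 / δ) := Real.log_pos (by rw [lt_div_iff₀ hδ0]; linarith)
  have hL10 : 0 < Real.log (10 / δ) := Real.log_pos (by rw [lt_div_iff₀ hδ0]; linarith)
  have hD1 : 0 ≤ Delta1 d δ q := Delta1_nonneg d hδ0 hδ1 hq
  have hD2 : 0 ≤ Delta2 d δ q := Delta2_nonneg d hq
  have hDi : 0 ≤ DeltaInf q := by unfold DeltaInf; linarith
  have hα := alpha_pos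
  have hL20 : 0 ≤ Real.log (20 * d / δ) := by
    rcases Nat.eq_zero_or_pos d with rfl | hd
    · simp
    · refine Real.log_nonneg ?_
      rw [le_div_iff₀ hδ0]
      have : (1:ℝ) ≤ d := by exact_mod_cast hd
      nlinarith
  set L20 := Real.log (20 * ↑d / δ) with hL20def
  have hc : 0 < 2 / (p * (1 - p)) := by positivity
  have hB : (0:ℝ) < 3 * p ^ 2 - 3 * p + 1 := by nlinarith [sq_nonneg (2*p - 1)]
  set c := 2 / (p * (1 - p)) with hcdef
  set B := 3 * p ^ 2 - 3 * p + 1 with hBdef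
  -- constants
  refine ⟨Delta2 d δ q * Real.sqrt (2 * Real.log (1.25 / δ)) / Real.sqrt (p * (1 - p)) +
    alphaC * Delta1 d δ q * (p ^ 2 + (1 - p) ^ 2) / (p ^ 2 * (1 - p) ^ 2 * (1 - δ / 10)) * (p * (1 - p) + 1) +
    Delta2 d δ q / Real.sqrt (1 - δ / 10) *
      Real.sqrt (2 * (B * (5 + c) / (p ^ 2 * (1 - p) ^ 2)) * Real.log (10 / δ)) +
    (2 / 3 * alphaC * (p ^ 2 + (1 - p) ^ 2) * Real.log (10 / δ) * DeltaInf q / (p ^ 2 * (1 - p) ^ 2)) *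
      (Real.sqrt (2 * p * (1 - p) * L20) + 1 + 2 / 3 * max p (1 - p) * L20) ^ 2 +
    2 * Real.log (1.25 / δ) * DeltaInf q / (p * (1 - p)), ?_⟩
  intro n hn
  have hn0 : 0 < n := by linarith
  have hsn : 0 < Real.sqrt n := Real.sqrt_pos.2 hn0
  have hsq : Real.sqrt n ^ 2 = n := Real.sq_sqrt hn0.le
  have hsle : Real.sqrt n ≤ n := by
    nlinarith [Real.sqrt_nonneg n, sq_nonneg (Real.sqrt n - 1)]
  have hs1 : 1 ≤ Real.sqrt n := by nlinarith [Real.sqrt_nonneg n]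
  -- term 1
  have h1 : Delta2 d δ q * Real.sqrt (2 * Real.log (1.25 / δ)) / Real.sqrt (n * p * (1 - p)) ≤
      (Delta2 d δ q * Real.sqrt (2 * Real.log (1.25 / δ)) / Real.sqrt (p * (1 - p))) / Real.sqrt n := by
    have e0 : Real.sqrt (n * p * (1 - p)) = Real.sqrt n * Real.sqrt (p * (1 - p)) := by
      rw [show n * p * (1 - p) = n * (p * (1 - p)) by ring, Real.sqrt_mul hn0.le]
    rw [e0]; rw [div_div]; rw [mul_comm (Real.sqrt n)]
  -- term 2
  have h2 : alphaC * Delta1 d δ q * (n * p * (1 - p) + 1) * (p ^ 2 + (1 - p) ^ 2) /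
      (n ^ 2 * p ^ 2 * (1 - p) ^ 2 * (1 - δ / 10)) ≤
      (alphaC * Delta1 d δ q * (p ^ 2 + (1 - p) ^ 2) / (p ^ 2 * (1 - p) ^ 2 * (1 - δ / 10)) *
        (p * (1 - p) + 1)) / Real.sqrt n := by
    have e2 : alphaC * Delta1 d δ q * (n * p * (1 - p) + 1) * (p ^ 2 + (1 - p) ^ 2) /
        (n ^ 2 * p ^ 2 * (1 - p) ^ 2 * (1 - δ / 10)) =
        (alphaC * Delta1 d δ q * (p ^ 2 + (1 - p) ^ 2) / (p ^ 2 * (1 - p) ^ 2 * (1 - δ / 10))) *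
          ((n * (p * (1 - p)) + 1) / n ^ 2) := by
      field_simp
    have e2' : (alphaC * Delta1 d δ q * (p ^ 2 + (1 - p) ^ 2) / (p ^ 2 * (1 - p) ^ 2 * (1 - δ / 10)) *
        (p * (1 - p) + 1)) / Real.sqrt n =
        (alphaC * Delta1 d δ q * (p ^ 2 + (1 - p) ^ 2) / (p ^ 2 * (1 - p) ^ 2 * (1 - δ / 10))) *
          ((p * (1 - p) + 1) / Real.sqrt n) := by ring
    rw [e2, e2']
    apply mul_le_mul_of_nonneg_left _ (by positivity)
    rw [div_le_div_iff₀ (by positivity) hsn]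
    have k1 : (n * (p * (1 - p)) + 1) * Real.sqrt n ≤ (n * (p * (1 - p)) + 1) * n :=
      mul_le_mul_of_nonneg_left hsle (by nlinarith)
    nlinarith [mul_nonneg (mul_nonneg hA.le hn0.le) (sub_nonneg.2 hn)]
  -- term 3
  have h3 : Delta2 d δ q / Real.sqrt (1 - δ / 10) * Real.sqrt (2 * S1 n p * Real.log (10 / δ)) ≤
      (Delta2 d δ q / Real.sqrt (1 - δ / 10) *
        Real.sqrt (2 * (B * (5 + c) / (p ^ 2 * (1 - p) ^ 2)) * Real.log (10 / δ))) / Real.sqrt n := by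
    have hS1b : S1 n p ≤ (B * (5 + c) / (p ^ 2 * (1 - p) ^ 2)) / n := by
      have e1 : S1 n p = (B * (3 * n + 2 + c)) /
          (n * (n + 1) * (n + 2) * p ^ 2 * (1 - p) ^ 2) := by
        rw [hBdef, hcdef]; unfold S1; ring
      rw [e1, div_div]
      rw [div_le_div_iff₀ (by positivity) (by positivity)]
      have key : (3 * n + 2 + c) * n ≤ (5 + c) * (n * (n + 1) * (n + 2)) := by
        nlinarith [mul_nonneg hc.le hn0.le, mul_nonneg (mul_nonneg hc.le hn0.le) hn0.le,
          mul_nonneg hn0.le hn0.le, mul_nonneg (mul_nonneg hn0.le hn0.le) hn0.le]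
      have hBpq : (0:ℝ) ≤ B * (p ^ 2 * (1 - p) ^ 2) := by positivity
      linarith [mul_le_mul_of_nonneg_left key hBpq]
    have hsqb : Real.sqrt (2 * S1 n p * Real.log (10 / δ)) ≤
        Real.sqrt (2 * (B * (5 + c) / (p ^ 2 * (1 - p) ^ 2)) * Real.log (10 / δ)) / Real.sqrt n := by
      have step : 2 * S1 n p * Real.log (10 / δ) ≤
          (2 * (B * (5 + c) / (p ^ 2 * (1 - p) ^ 2)) * Real.log (10 / δ)) / n := by
        have := mul_le_mul_of_nonneg_right hS1b (by positivity : (0:ℝ) ≤ 2 * Real.log (10 / δ))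
        calc 2 * S1 n p * Real.log (10 / δ) = S1 n p * (2 * Real.log (10 / δ)) := by ring
          _ ≤ ((B * (5 + c) / (p ^ 2 * (1 - p) ^ 2)) / n) * (2 * Real.log (10 / δ)) := this
          _ = (2 * (B * (5 + c) / (p ^ 2 * (1 - p) ^ 2)) * Real.log (10 / δ)) / n := by ring
      calc Real.sqrt (2 * S1 n p * Real.log (10 / δ)) ≤
          Real.sqrt ((2 * (B * (5 + c) / (p ^ 2 * (1 - p) ^ 2)) * Real.log (10 / δ)) / n) :=
            Real.sqrt_le_sqrt step
        _ = Real.sqrt (2 * (B * (5 + c) / (p ^ 2 * (1 - p) ^ 2)) * Real.log (10 / δ)) / Real.sqrt n := by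
            rw [Real.sqrt_div (by positivity)]
    rw [mul_div_assoc]
    exact mul_le_mul_of_nonneg_left hsqb (by positivity)
  -- term 4
  have h4 : 2 / 3 * alphaC * S2 d δ n p * (p ^ 2 + (1 - p) ^ 2) * Real.log (10 / δ) * DeltaInf q /
      (n ^ 2 * p ^ 2 * (1 - p) ^ 2) ≤
      ((2 / 3 * alphaC * (p ^ 2 + (1 - p) ^ 2) * Real.log (10 / δ) * DeltaInf q / (p ^ 2 * (1 - p) ^ 2)) *
        (Real.sqrt (2 * p * (1 - p) * L20) + 1 + 2 / 3 * max p (1 - p) * L20) ^ 2) / Real.sqrt n := by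
    set s := Real.sqrt (2 * p * (1 - p) * L20) with hsdef
    set β := 2 / 3 * max p (1 - p) * L20 with hβdef
    have hβ : 0 ≤ β := by
      have h1 : 0 ≤ max p (1 - p) := le_trans hp.le (le_max_left _ _)
      rw [hβdef]; positivity
    have hsnn : 0 ≤ s := Real.sqrt_nonneg _
    have hsqn : Real.sqrt (2 * n * p * (1 - p) * L20) = Real.sqrt n * s := by
      rw [hsdef, ← Real.sqrt_mul hn0.le]; ring_nf
    have hS2b : S2 d δ n p ≤ n * (s + 1 + β) ^ 2 := by
      unfold S2
      rw [← hL20def, ← hβdef, hsqn]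
      have hbase : Real.sqrt n * s + 1 + β ≤ Real.sqrt n * (s + 1 + β) := by
        nlinarith [mul_nonneg (sub_nonneg.2 hs1) (by linarith : (0:ℝ) ≤ 1 + β)]
      calc (Real.sqrt n * s + 1 + β) ^ 2 ≤ (Real.sqrt n * (s + 1 + β)) ^ 2 := by
            apply pow_le_pow_left₀ (by positivity) hbase
        _ = n * (s + 1 + β) ^ 2 := by rw [mul_pow, hsq]
    have e4 : 2 / 3 * alphaC * S2 d δ n p * (p ^ 2 + (1 - p) ^ 2) * Real.log (10 / δ) * DeltaInf q /
        (n ^ 2 * p ^ 2 * (1 - p) ^ 2) =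
        (2 / 3 * alphaC * (p ^ 2 + (1 - p) ^ 2) * Real.log (10 / δ) * DeltaInf q /
          (p ^ 2 * (1 - p) ^ 2)) * (S2 d δ n p / n ^ 2) := by
      field_simp
    rw [e4]
    have hC : 0 ≤ 2 / 3 * alphaC * (p ^ 2 + (1 - p) ^ 2) * Real.log (10 / δ) * DeltaInf q /
        (p ^ 2 * (1 - p) ^ 2) := by
      apply div_nonneg _ (by positivity)
      exact mul_nonneg (by positivity) hDi
    have hchain : S2 d δ n p / n ^ 2 ≤ (s + 1 + β) ^ 2 / Real.sqrt n := by
      calc S2 d δ n p / n ^ 2 ≤ n * (s + 1 + β) ^ 2 / n ^ 2 := by gcongr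
        _ = (s + 1 + β) ^ 2 / n := by
            rw [show n ^ 2 = n * n by ring, mul_div_mul_left _ _ hn0.ne']
        _ ≤ (s + 1 + β) ^ 2 / Real.sqrt n := div_anti (by positivity) hsn hsle
    calc 2 / 3 * alphaC * (p ^ 2 + (1 - p) ^ 2) * Real.log (10 / δ) * DeltaInf q /
          (p ^ 2 * (1 - p) ^ 2) * (S2 d δ n p / n ^ 2) ≤
        2 / 3 * alphaC * (p ^ 2 + (1 - p) ^ 2) * Real.log (10 / δ) * DeltaInf q /
          (p ^ 2 * (1 - p) ^ 2) * ((s + 1 + β) ^ 2 / Real.sqrt n) :=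
          mul_le_mul_of_nonneg_left hchain hC
      _ = 2 / 3 * alphaC * (p ^ 2 + (1 - p) ^ 2) * Real.log (10 / δ) * DeltaInf q /
          (p ^ 2 * (1 - p) ^ 2) * (s + 1 + β) ^ 2 / Real.sqrt n := by
          ring
  -- term 5
  have h5 : 2 * Real.log (1.25 / δ) * DeltaInf q / (n * p * (1 - p)) ≤
      (2 * Real.log (1.25 / δ) * DeltaInf q / (p * (1 - p))) / Real.sqrt n := by
    have e5 : 2 * Real.log (1.25 / δ) * DeltaInf q / (n * p * (1 - p)) =
        (2 * Real.log (1.25 / δ) * DeltaInf q / (p * (1 - p))) / n := by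
      rw [div_div, show p * (1 - p) * n = n * p * (1 - p) by ring]
    rw [e5]
    exact div_anti (by positivity) hsn hsle
  unfold eps
  rw [add_div, add_div, add_div, add_div]
  exact add_le_add (add_le_add (add_le_add (add_le_add h1 h2) h3) h4) h5

lemma exists_eps_le (d : ℕ) {δ q p eb : ℝ} (hδ0 : 0 < δ) (hδ1 : δ < 1) (hq : 2 ≤ q)
    (hp : 0 < p) (hp1 : p < 1) (heb : 0 < eb) :
    ∃ n' : ℕ, 1 ≤ n' ∧ eps d δ q (n' : ℝ) p ≤ eb := by
  obtain ⟨M, hM⟩ := eps_bound d hδ0 hδ1 hq hp hp1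
  set M' := max M 1 with hM'def
  have hM'pos : 0 < M' := lt_of_lt_of_le one_pos (le_max_right _ _)
  obtain ⟨n', hn'⟩ := exists_nat_gt (max 1 ((M' / eb) ^ 2))
  have h1n : (1:ℝ) ≤ (n' : ℝ) := le_of_lt (lt_of_le_of_lt (le_max_left _ _) hn')
  have hsn : 0 < Real.sqrt (n' : ℝ) := Real.sqrt_pos.2 (by linarith)
  refine ⟨n', by exact_mod_cast h1n, ?_⟩
  calc eps d δ q (n' : ℝ) p ≤ M / Real.sqrt (n' : ℝ) := hM _ h1n
    _ ≤ M' / Real.sqrt (n' : ℝ) := by gcongr; exact le_max_left _ _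
    _ ≤ eb := by
        rw [div_le_iff₀ hsn]
        have hsge : M' / eb ≤ Real.sqrt (n' : ℝ) := by
          have : ((M' / eb) ^ 2 : ℝ) ≤ (n' : ℝ) := le_of_lt (lt_of_le_of_lt (le_max_right _ _) hn')
          calc M' / eb = Real.sqrt ((M' / eb) ^ 2) := (Real.sqrt_sq (by positivity)).symm
            _ ≤ Real.sqrt (n' : ℝ) := Real.sqrt_le_sqrt this
        calc M' = eb * (M' / eb) := by field_simp
          _ ≤ eb * Real.sqrt (n' : ℝ) := mul_le_mul_of_nonneg_left hsge heb.le


set_option maxHeartbeats 1000000 in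
/-- every Φ2-feasible tuple is Φ1-feasible. -/
theorem phi2_feasible_imp_phi1_feasible {ι : Type*} [Fintype ι] [Nonempty ι] (d : ℕ) (hd : 1 ≤ d)
    (δ : ℝ) (hδ : δ ∈ Set.Ioo (0 : ℝ) 1) (K : ℕ) (hK : 1 ≤ K)
    (hcard : Fintype.card ι = K) (eb T W ω₀ : ℝ) (heb : 0 < eb) (hT : 0 < T) (hW : 0 < W)
    (hω : 0 < ω₀) (h Pmin Pmax : ι → ℝ) (hh : ∀ k, 0 < h k)
    (hPbnd : ∀ k, 0 < Pmin k ∧ Pmin k ≤ Pmax k)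
    (hKsmall : (K : ℝ) < 92 * Real.log (10 * d / δ))
    (hfloor : 4 ≤ ⌊Cval d T W ω₀ h Pmax⌋)
    (q n : ℤ) (p : ℝ) (P : ι → ℝ)
    (hfeas : Phi2Feasible d δ K eb T W ω₀ h Pmin Pmax q n p P) :
    Phi1Feasible d δ K eb T W ω₀ h Pmin Pmax q n p P := by
  obtain ⟨hqB, hnB, hpB, hQC, hneq, hPdef⟩ := hfeas
  obtain ⟨hδ0, hδ1⟩ := hδ
  obtain ⟨hp, hp1⟩ := hpB
  have hq2 : (2:ℝ) ≤ (q:ℝ) := by exact_mod_cast hqB.1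
  have hn2 : (2:ℝ) ≤ (n:ℝ) := by exact_mod_cast hnB.1
  have h1p : 0 < 1 - p := by linarith
  have hA : 0 < p * (1 - p) := mul_pos hp h1p
  have hKpos : (0:ℝ) < K := by exact_mod_cast hK
  -- P bounds
  have hPle : ∀ k, Pmin k ≤ P k ∧ P k ≤ Pmax k := by
    intro k
    rw [hPdef k]
    exact ⟨le_min (hPbnd k).2 (le_max_left _ _), min_le_left _ _⟩
  refine ⟨hqB, hnB, ⟨hp, hp1⟩, ?_, ?_, ?_, hPle⟩
  · -- counting constraint
    have hceil : (⌈max (23 * Real.log (10 * d / δ)) (2 * ((q : ℝ) + 1)) /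
        ((K : ℝ) * p * (1 - p))⌉ : ℤ) ≤ n := hneq ▸ le_max_left _ _
    have hx : max (23 * Real.log (10 * d / δ)) (2 * ((q : ℝ) + 1)) /
        ((K : ℝ) * p * (1 - p)) ≤ (n : ℝ) := Int.ceil_le.1 hceil
    have hKA : (0:ℝ) < (K : ℝ) * p * (1 - p) := by positivity
    rw [div_le_iff₀ hKA] at hx
    calc max (23 * Real.log (10 * d / δ)) (2 * ((q : ℝ) + 1)) ≤
        (n : ℝ) * ((K : ℝ) * p * (1 - p)) := hx
      _ = (K : ℝ) * (n : ℝ) * p * (1 - p) := by ring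
  · -- privacy constraint
    have hne : {n' : ℕ | 1 ≤ n' ∧ eps d δ (q : ℝ) (n' : ℝ) p ≤ eb}.Nonempty :=
      exists_eps_le d hδ0 hδ1 hq2 hp hp1 heb
    have hmem := Nat.sInf_mem hne
    have hn1le : ((nOne d δ eb q p : ℤ)) ≤ n := hneq ▸ le_max_right _ _
    have hn1leR : ((nOne d δ eb q p : ℕ) : ℝ) ≤ (n : ℝ) := by exact_mod_cast hn1le
    have h1n1 : (1:ℝ) ≤ ((nOne d δ eb q p : ℕ) : ℝ) := by
      exact_mod_cast hmem.1
    calc eps d δ (q : ℝ) (n : ℝ) p ≤ eps d δ (q : ℝ) ((nOne d δ eb q p : ℕ) : ℝ) p :=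
        eps_anti d hδ0 hδ1 hq2 hp hp1 h1n1 hn1leR
      _ ≤ eb := hmem.2
  · -- power constraint
    intro k
    have hd0 : (0:ℝ) < (d : ℝ) := by exact_mod_cast hd
    have hz1 : (1:ℝ) < (q : ℝ) + (n : ℝ) := by linarith
    have hz0 : (0:ℝ) < (q : ℝ) + (n : ℝ) := by linarith
    have hPk : 0 < P k := lt_of_lt_of_le (hPbnd k).1 (hPle k).1
    have hbase : 0 < 1 + P k * h k / ω₀ := by
      have hhk := hh k
      have : 0 < P k * h k / ω₀ := by positivity
      linarith
    have hkey : (q : ℝ) + (n : ℝ) ≤ (1 + P k * h k / ω₀) ^ (T * W / (d : ℝ)) := by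
      set y := ω₀ * (((q : ℝ) + (n : ℝ)) ^ ((d : ℝ) / (T * W)) - 1) / h k with hydef
      rcases le_total y (Pmax k) with hcase | hcase
      · -- P k ≥ y
        have hyP : y ≤ P k := by
          rw [hPdef k]; exact le_min hcase (le_max_right _ _)
        have hyh : 1 + y * h k / ω₀ = ((q : ℝ) + (n : ℝ)) ^ ((d : ℝ) / (T * W)) := by
          rw [hydef]; field_simp [hω.ne', (hh k).ne']; ring
        have hle : ((q : ℝ) + (n : ℝ)) ^ ((d : ℝ) / (T * W)) ≤ 1 + P k * h k / ω₀ := by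
          rw [← hyh]
          have hhk := hh k
          have : y * h k / ω₀ ≤ P k * h k / ω₀ := by
            gcongr
          linarith
        calc (q : ℝ) + (n : ℝ) = (((q : ℝ) + (n : ℝ)) ^ ((d : ℝ) / (T * W))) ^ (T * W / (d : ℝ)) := by
              rw [← Real.rpow_mul hz0.le]
              rw [show (d : ℝ) / (T * W) * (T * W / (d : ℝ)) = 1 by
                field_simp]
              exact (Real.rpow_one _).symm
          _ ≤ (1 + P k * h k / ω₀) ^ (T * W / (d : ℝ)) := by
              exact Real.rpow_le_rpow (Real.rpow_nonneg hz0.le _) hle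
                (div_nonneg (mul_nonneg hT.le hW.le) hd0.le)
      · -- P k = Pmax k
        have hPkeq : P k = Pmax k := by
          rw [hPdef k]
          exact min_eq_left (le_trans hcase (le_max_right _ _))
        have hinf : Finset.univ.inf' Finset.univ_nonempty (fun k => Pmax k * h k / ω₀) ≤
            Pmax k * h k / ω₀ := Finset.inf'_le _ (Finset.mem_univ k)
        have hinf0 : 0 ≤ Finset.univ.inf' Finset.univ_nonempty (fun k => Pmax k * h k / ω₀) := by
          apply Finset.le_inf'
          intro b _
          exact div_nonneg (mul_nonneg (le_trans (hPbnd b).1.le (hPbnd b).2) (hh b).le) hω.le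
        calc (q : ℝ) + (n : ℝ) ≤ Cval d T W ω₀ h Pmax := hQC
          _ = (1 + Finset.univ.inf' Finset.univ_nonempty (fun k => Pmax k * h k / ω₀)) ^
              (T * W / (d : ℝ)) := rfl
          _ ≤ (1 + Pmax k * h k / ω₀) ^ (T * W / (d : ℝ)) := by
              exact Real.rpow_le_rpow (by linarith) (by linarith)
                (div_nonneg (mul_nonneg hT.le hW.le) hd0.le)
          _ = (1 + P k * h k / ω₀) ^ (T * W / (d : ℝ)) := by rw [hPkeq]
    have hlogb : Real.logb 2 ((q : ℝ) + (n : ℝ)) ≤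
        (T * W / (d : ℝ)) * Real.logb 2 (1 + P k * h k / ω₀) := by
      calc Real.logb 2 ((q : ℝ) + (n : ℝ)) ≤
          Real.logb 2 ((1 + P k * h k / ω₀) ^ (T * W / (d : ℝ))) :=
            Real.logb_le_logb_of_le (by norm_num) hz0 hkey
        _ = (T * W / (d : ℝ)) * Real.logb 2 (1 + P k * h k / ω₀) :=
            Real.logb_rpow_eq_mul_logb_of_pos hbase
    calc (d : ℝ) * Real.logb 2 ((q : ℝ) + (n : ℝ)) ≤
        (d : ℝ) * ((T * W / (d : ℝ)) * Real.logb 2 (1 + P k * h k / ω₀)) :=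
          mul_le_mul_of_nonneg_left hlogb hd0.le
      _ = T * W * Real.logb 2 (1 + P k * h k / ω₀) := by
          field_simp
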